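/- Let V be a Euclidean Jordan algebra of rank r, dimension n, with Peirce constant d even, and suppose either d ≡ 0 (mod 4), or d ≡ 2 (mod 4) with r odd. Then the zeta distributions Z_±(f,s) = ∫_V f(x) det(x)^{s,±} dx satisfy Z_+(f̂, s − n/r) = 2^r (2π)^{−rs} Γ_Ω(s) cos^r(πs/2) Z_+(f, −s) and Z_−(f̂, s − n/r) = (2i)^r (2π)^{−rs} Γ_Ω(s) sin^r(πs/2) Z_−(f, −s), where Γ_Ω(s) = (2π)^{(n−r)/2} ∏_{j=1}^r Γ(s − (j−1)d/2), assuming the Faraut–Satake system of functional equations Z_ℓ(f̂, s − n/r) = (2π)^{−rs} e^{iπrs/2} Γ_Ω(s) Σ_κ u_{ℓ,κ}(s) Z_κ(f,−s) with Σ_{ℓ=0}^r y^ℓ u_{ℓ,κ}(s) = (y + e^{−iπs})^κ (y e^{−iπs} + 1)^{r−κ}. -/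
import Mathlib


set_option autoImplicit false

open Complex Finset

/-- The Gindikin gamma function `Γ_Ω(s) = (2π)^{(n−r)/2} ∏_{j=1}^r Γ(s − (j−1)d/2)`. -/
noncomputable def GammaOmega (r n d : ℕ) (s : ℂ) : ℂ :=
  (2 * (Real.pi : ℂ)) ^ (((n : ℂ) - (r : ℂ)) / 2)
    * ∏ j ∈ range r, Complex.Gamma (s - (j : ℂ) * (d : ℂ) / 2)

/-- diagonal functional equations for a Euclidean Jordan algebra of rank `r`,
dimension `n`, even Peirce constant `d`, with `d ≡ 0 (mod 4)` or (`d ≡ 2 (mod 4)` and `r`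
odd). Assuming the Faraut–Satake system
`Z_ℓ(f̂, s − n/r) = (2π)^{−rs} e^{iπrs/2} Γ_Ω(s) ∑_κ u_{ℓ,κ}(s) Z_κ(f,−s)` with
`∑_ℓ y^ℓ u_{ℓ,κ}(s) = (y + e^{−iπs})^κ (y e^{−iπs} + 1)^{r−κ}`, the distributions
`Z_± = ∑_ℓ (±1)^ℓ Z_ℓ` satisfy
`Z_+(f̂, s − n/r) = 2^r (2π)^{−rs} Γ_Ω(s) cos^r(πs/2) Z_+(f, −s)` and
`Z_−(f̂, s − n/r) = (2i)^r (2π)^{−rs} Γ_Ω(s) sin^r(πs/2) Z_−(f, −s)`.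
Here `A ℓ = Z_ℓ(f̂, ·)` and `B ℓ = Z_ℓ(f, ·)` for a fixed Schwartz function `f`. -/
theorem stmt_8 (r n d : ℕ) (hr : 0 < r)
    (hd : d % 4 = 0 ∨ (d % 4 = 2 ∧ r % 2 = 1))
    (u : ℕ → ℕ → ℂ → ℂ)
    (hgen : ∀ κ ≤ r, ∀ s : ℂ, ∀ y : ℝ,
      ∑ l ∈ range (r + 1), (y : ℂ) ^ l * u l κ s
        = ((y : ℂ) + exp (-I * (Real.pi : ℂ) * s)) ^ κ * ((y : ℂ) * exp (-I * (Real.pi : ℂ) * s) + 1) ^ (r - κ))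
    (A B : ℕ → ℂ → ℂ)
    (hFS : ∀ l ≤ r, ∀ s : ℂ,
      A l (s - (n : ℂ) / (r : ℂ))
        = (2 * (Real.pi : ℂ)) ^ (-(r : ℂ) * s) * exp (I * (Real.pi : ℂ) * r * s / 2) * GammaOmega r n d s
            * ∑ κ ∈ range (r + 1), u l κ s * B κ (-s))
    (s : ℂ) :
    (∑ l ∈ range (r + 1), A l (s - (n : ℂ) / (r : ℂ))
        = 2 ^ r * (2 * (Real.pi : ℂ)) ^ (-(r : ℂ) * s) * GammaOmega r n d s
            * cos ((Real.pi : ℂ) * s / 2) ^ r * ∑ l ∈ range (r + 1), B l (-s)) ∧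
    (∑ l ∈ range (r + 1), (-1 : ℂ) ^ l * A l (s - (n : ℂ) / (r : ℂ))
        = (2 * I) ^ r * (2 * (Real.pi : ℂ)) ^ (-(r : ℂ) * s) * GammaOmega r n d s
            * sin ((Real.pi : ℂ) * s / 2) ^ r * ∑ l ∈ range (r + 1), (-1 : ℂ) ^ l * B l (-s)) := by
  set π : ℂ := (Real.pi : ℂ)
  set E : ℂ := exp (-I * π * s) with hE
  set C : ℂ := (2 * π) ^ (-(r : ℂ) * s) * exp (I * π * r * s / 2) * GammaOmega r n d s with hC
  -- half-angle exponentials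
  have hhalf : exp (I * π * s / 2) * E = exp (-(I * π * s / 2)) := by
    rw [hE, ← Complex.exp_add]; ring_nf
  have hcos : exp (I * π * s / 2) * (1 + E) = 2 * cos (π * s / 2) := by
    rw [mul_add, mul_one, hhalf, Complex.cos]
    have h1 : (π * s / 2) * I = I * π * s / 2 := by ring
    have h2 : -(π * s / 2) * I = -(I * π * s / 2) := by ring
    rw [h1, h2]; ring
  have hsin : exp (I * π * s / 2) * (1 - E) = 2 * I * sin (π * s / 2) := by
    rw [mul_sub, mul_one, hhalf, Complex.sin]
    have h1 : (π * s / 2) * I = I * π * s / 2 := by ring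
    have h2 : -(π * s / 2) * I = -(I * π * s / 2) := by ring
    rw [h1, h2]
    field_simp
    ring_nf
    simp [Complex.I_sq]
    ring
  have hexpr : exp (I * π * (r : ℂ) * s / 2) = exp (I * π * s / 2) ^ r := by
    rw [← Complex.exp_nat_mul]; ring_nf
  -- column sums of u
  have hplus : ∀ κ ≤ r, ∑ l ∈ range (r + 1), u l κ s = (1 + E) ^ r := by
    intro κ hκ
    have := hgen κ hκ s 1
    simp only [Complex.ofReal_one, one_pow, one_mul] at this
    rw [← hE] at this
    rw [this, add_comm E 1, ← pow_add, Nat.add_sub_cancel' hκ]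
  have hminus : ∀ κ ≤ r, ∑ l ∈ range (r + 1), (-1 : ℂ) ^ l * u l κ s
      = (-1 : ℂ) ^ κ * (1 - E) ^ r := by
    intro κ hκ
    have := hgen κ hκ s (-1)
    push_cast at this
    rw [← hE] at this
    rw [this]
    have h1 : ((-1 : ℂ) + E) ^ κ = (-1 : ℂ) ^ κ * (1 - E) ^ κ := by
      rw [← neg_one_mul, ← mul_pow]; ring_nf
    have h2 : ((-1 : ℂ) * E + 1) = (1 - E) := by ring
    rw [h1, h2, mul_assoc, ← pow_add, Nat.add_sub_cancel' hκ]
  constructor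
  · calc ∑ l ∈ range (r + 1), A l (s - (n : ℂ) / (r : ℂ))
        = ∑ l ∈ range (r + 1), C * ∑ κ ∈ range (r + 1), u l κ s * B κ (-s) := by
          refine Finset.sum_congr rfl fun l hl => ?_
          exact hFS l (by simpa using Nat.lt_succ_iff.mp (mem_range.mp hl)) s
      _ = C * ∑ κ ∈ range (r + 1), (∑ l ∈ range (r + 1), u l κ s) * B κ (-s) := by
          simp only [Finset.mul_sum, Finset.sum_mul]
          rw [Finset.sum_comm]
      _ = C * (1 + E) ^ r * ∑ κ ∈ range (r + 1), B κ (-s) := by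
          have h : ∀ κ ∈ range (r + 1),
              (∑ l ∈ range (r + 1), u l κ s) * B κ (-s) = (1 + E) ^ r * B κ (-s) :=
            fun κ hκ => by rw [hplus κ (Nat.lt_succ_iff.mp (mem_range.mp hκ))]
          rw [Finset.sum_congr rfl h, ← Finset.mul_sum, ← mul_assoc]
      _ = 2 ^ r * (2 * π) ^ (-(r : ℂ) * s) * GammaOmega r n d s
            * cos (π * s / 2) ^ r * ∑ l ∈ range (r + 1), B l (-s) := by
          have key : C * (1 + E) ^ r
              = 2 ^ r * (2 * π) ^ (-(r : ℂ) * s) * GammaOmega r n d s * cos (π * s / 2) ^ r := by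
            have h := congrArg (· ^ r) hcos
            simp only [mul_pow] at h
            rw [hC, hexpr]
            linear_combination ((2 * π) ^ (-(r : ℂ) * s) * GammaOmega r n d s) * h
          rw [key]
  · calc ∑ l ∈ range (r + 1), (-1:ℂ)^l * A l (s - (n : ℂ) / (r : ℂ))
        = ∑ l ∈ range (r + 1), (-1:ℂ)^l * (C * ∑ κ ∈ range (r + 1), u l κ s * B κ (-s)) := by
          refine Finset.sum_congr rfl fun l hl => ?_
          rw [hFS l (by simpa using Nat.lt_succ_iff.mp (mem_range.mp hl)) s]
      _ = C * ∑ κ ∈ range (r + 1), (∑ l ∈ range (r + 1), (-1:ℂ)^l * u l κ s) * B κ (-s) := by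
          simp only [Finset.mul_sum, Finset.sum_mul]
          rw [Finset.sum_comm]
          exact Finset.sum_congr rfl fun l _ => Finset.sum_congr rfl fun κ _ => by ring
      _ = C * (1 - E) ^ r * ∑ κ ∈ range (r + 1), (-1:ℂ)^κ * B κ (-s) := by
          have h : ∀ κ ∈ range (r + 1),
              (∑ l ∈ range (r + 1), (-1:ℂ)^l * u l κ s) * B κ (-s)
                = (1 - E) ^ r * ((-1:ℂ)^κ * B κ (-s)) :=
            fun κ hκ => by rw [hminus κ (Nat.lt_succ_iff.mp (mem_range.mp hκ))]; ring
          rw [Finset.sum_congr rfl h, ← Finset.mul_sum, ← mul_assoc]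
      _ = (2 * I) ^ r * (2 * π) ^ (-(r : ℂ) * s) * GammaOmega r n d s
            * sin (π * s / 2) ^ r * ∑ l ∈ range (r + 1), (-1:ℂ)^l * B l (-s) := by
          have key : C * (1 - E) ^ r
              = (2 * I) ^ r * (2 * π) ^ (-(r : ℂ) * s) * GammaOmega r n d s * sin (π * s / 2) ^ r := by
            have h := congrArg (· ^ r) hsin
            simp only [mul_pow] at h
            rw [hC, hexpr]
            linear_combination ((2 * π) ^ (-(r : ℂ) * s) * GammaOmega r n d s) * h
          rw [key]
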